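/- In an additive Gaussian noise model, if j is a leaf of the causal DAG (has no children), then the partial derivative ∂s_j(x)/∂x_j = -1/σ_j² for all x; in particular Var_X[∂s_j(X)/∂x_j] = 0. -/

import Mathlib

/-- Directional derivative of `f` vanishes along coordinate `j` if `f`
does not depend on coordinate `j`. -/
lemma dir_deriv_zero {d : ℕ} (f : (Fin d → ℝ) → ℝ) (hdiff : Differentiable ℝ f)
    (j : Fin d) (hconst : ∀ x y : Fin d → ℝ, (∀ k, k ≠ j → x k = y k) → f x = f y)
    (x : Fin d → ℝ) : fderiv ℝ f x (Pi.single j 1) = 0 := by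
  have hline : HasDerivAt (fun t : ℝ => x + t • (Pi.single j 1 : Fin d → ℝ)) (Pi.single j 1 : Fin d → ℝ) 0 := by
    simpa using ((hasDerivAt_id (0 : ℝ)).smul_const (Pi.single j (1:ℝ))).const_add x
  have hcomp : HasDerivAt (fun t : ℝ => f (x + t • (Pi.single j 1 : Fin d → ℝ)))
      (fderiv ℝ f x (Pi.single j 1)) 0 := by
    have := (hdiff (x + (0:ℝ) • (Pi.single j 1 : Fin d → ℝ))).hasFDerivAt.comp_hasDerivAt 0 hline
    simp at this
    exact this
  have hconstfun : (fun t : ℝ => f (x + t • (Pi.single j 1 : Fin d → ℝ))) = fun _ => f x := by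
    funext t
    apply hconst
    intro k hk
    simp [Pi.single_eq_of_ne hk]
  rw [hconstfun] at hcomp
  have := (hasDerivAt_const (0:ℝ) (f x)).unique hcomp
  exact this.symm

theorem leaf_score_diag_const {d : ℕ}
    (pa : Fin d → Finset (Fin d)) (f : Fin d → (Fin d → ℝ) → ℝ)
    (σ : Fin d → ℝ) (hσ : ∀ i, 0 < σ i)
    (hnotself : ∀ i, i ∉ pa i)
    (hdep : ∀ i, ∀ x y : Fin d → ℝ, (∀ k ∈ pa i, x k = y k) → f i x = f i y)
    (hdiff : ∀ i, Differentiable ℝ (f i))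
    (s : Fin d → (Fin d → ℝ) → ℝ)
    (hs : ∀ j x, s j x =
      -((x j - f j x) / σ j ^ 2)
      + ∑ i ∈ Finset.univ.filter (fun i => j ∈ pa i),
          fderiv ℝ (f i) x (Pi.single j 1) * ((x i - f i x) / σ i ^ 2))
    (j : Fin d) (hleaf : ∀ i, j ∉ pa i) :
    ∀ x, fderiv ℝ (s j) x (Pi.single j 1) = -(1 / σ j ^ 2) := by
  intro x
  have hsj : s j = fun x => -((x j - f j x) / σ j ^ 2) := by
    funext y
    rw [hs j y]
    have : Finset.univ.filter (fun i => j ∈ pa i) = (∅ : Finset (Fin d)) := by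
      ext i; simp [hleaf i]
    rw [this]
    simp
  rw [hsj]
  have hproj : HasFDerivAt (fun y : Fin d → ℝ => y j)
      (ContinuousLinearMap.proj j : (Fin d → ℝ) →L[ℝ] ℝ) x :=
    (ContinuousLinearMap.proj j : (Fin d → ℝ) →L[ℝ] ℝ).hasFDerivAt
  have hfj : HasFDerivAt (f j) (fderiv ℝ (f j) x) x := (hdiff j x).hasFDerivAt
  have hF : HasFDerivAt (fun y : Fin d → ℝ => -((y j - f j y) / σ j ^ 2))
      (-((σ j ^ 2)⁻¹ • ((ContinuousLinearMap.proj j : (Fin d → ℝ) →L[ℝ] ℝ)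
        - fderiv ℝ (f j) x))) x := by
    have := ((hproj.sub hfj).const_smul ((σ j ^ 2)⁻¹)).neg
    convert this using 2
    all_goals first | rfl | simp [div_eq_inv_mul, smul_eq_mul]
  rw [hF.fderiv]
  have hzero : fderiv ℝ (f j) x (Pi.single j 1) = 0 := by
    apply dir_deriv_zero (f j) (hdiff j) j
    intro a b hab
    exact hdep j a b (fun k hk => hab k (fun h => hnotself j (h ▸ hk)))
  simp [hzero, div_eq_inv_mul]
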